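/- arXiv:1003.1568 — 2 statements merged into one kernel-verified Lean document; each statement's English description precedes it below -/
import Mathlib

section
/- Let O be a ℂ-subalgebra of ℂ[[t]] such that ℂ[[t]]/O is finite-dimensional over ℂ, and set Γ = {ord(h) : h ∈ O, h ≠ 0}. Then for every g ∈ Γ there exists a unique element τ_g ∈ O whose coefficient of t^g equals 1 and whose coefficient of t^i equals 0 for every i < g and for every i > g with i ∈ Γ. -/
set_option maxHeartbeats 1000000
set_option synthInstance.maxHeartbeats 400000

/-- The order of a formal power series: the smallest `i` such that the coefficient
of `t^i` is nonzero (junk value `0` for the zero series). -/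
noncomputable def ord (f : PowerSeries ℂ) : ℕ :=
  sInf {i : ℕ | PowerSeries.coeff i f ≠ 0}

lemma ord_spec {f : PowerSeries ℂ} (hf : f ≠ 0) :
    PowerSeries.coeff (ord f) f ≠ 0 ∧ ∀ i < ord f, PowerSeries.coeff i f = 0 := by
  have hne : {i : ℕ | PowerSeries.coeff i f ≠ 0}.Nonempty := by
    by_contra h
    rw [Set.not_nonempty_iff_eq_empty] at h
    apply hf
    ext i
    by_contra hc
    exact absurd (Set.mem_setOf.mpr (by simpa using hc)) (h ▸ Set.notMem_empty i)
  constructor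
  · exact Nat.sInf_mem hne
  · intro i hi
    by_contra h
    exact (Nat.sInf_le (Set.mem_setOf.mpr h)).not_gt hi

lemma linIndep_Xpow : LinearIndependent ℂ (fun n : ℕ => (PowerSeries.X : PowerSeries ℂ) ^ n) := by
  rw [linearIndependent_iff']
  intro s c h j hj
  have h2 := congrArg (PowerSeries.coeff j) h
  rw [map_sum, map_zero] at h2
  simp only [map_smul, PowerSeries.coeff_X_pow, smul_eq_mul, mul_ite, mul_one, mul_zero] at h2
  rwa [Finset.sum_ite_eq s j c, if_pos hj] at h2

lemma not_fd : ¬ FiniteDimensional ℂ (PowerSeries ℂ) := by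
  intro h
  have : Finite ℕ := linIndep_Xpow.finite
  exact not_finite ℕ

lemma exists_conductor (O : Subalgebra ℂ (PowerSeries ℂ))
    (hO : FiniteDimensional ℂ ((PowerSeries ℂ) ⧸ Subalgebra.toSubmodule O)) :
    ∃ N : ℕ, ∀ f : PowerSeries ℂ, (∀ i < N, PowerSeries.coeff i f = 0) → f ∈ O := by
  classical
  set p : Submodule ℂ (PowerSeries ℂ) := Subalgebra.toSubmodule O with hp
  -- Step 1: a nonzero conductor element
  obtain ⟨x, hxO, hx0, hxc⟩ : ∃ x, x ∈ O ∧ x ≠ 0 ∧ ∀ f, x * f ∈ O := by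
    by_contra hcon
    push_neg at hcon
    -- the multiplication action of O on the quotient
    have hle : ∀ x : p, p ≤ p.comap (LinearMap.mulLeft ℂ (x : PowerSeries ℂ)) := by
      intro x o ho
      exact O.mul_mem x.2 ho
    let ψ : p → ((PowerSeries ℂ ⧸ p) →ₗ[ℂ] (PowerSeries ℂ ⧸ p)) := fun x =>
      Submodule.mapQ p p (LinearMap.mulLeft ℂ (x : PowerSeries ℂ)) (hle x)
    have hψadd : ∀ x y : p, ψ (x + y) = ψ x + ψ y := by
      intro x y
      refine Submodule.linearMap_qext p ?_
      ext m
      simp [ψ, Submodule.mapQ_apply, add_mul]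
    have hψsmul : ∀ (c : ℂ) (x : p), ψ (c • x) = c • ψ x := by
      intro c x
      refine Submodule.linearMap_qext p ?_
      ext m
      simp [ψ, Submodule.mapQ_apply, smul_mul_assoc]
    let Ψ : p →ₗ[ℂ] ((PowerSeries ℂ ⧸ p) →ₗ[ℂ] (PowerSeries ℂ ⧸ p)) :=
      { toFun := ψ, map_add' := hψadd, map_smul' := hψsmul }
    have hΨinj : Function.Injective Ψ := by
      rw [← LinearMap.ker_eq_bot, Submodule.eq_bot_iff]
      intro x hx
      by_contra hxne
      have hxv : (x : PowerSeries ℂ) ≠ 0 := fun h => hxne (Subtype.ext h)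
      obtain ⟨f, hf⟩ := hcon x x.2 hxv
      apply hf
      have h2 : Ψ x (Submodule.Quotient.mk f) = 0 := by rw [hx]; rfl
      have h3 : Ψ x (Submodule.Quotient.mk f) =
          Submodule.Quotient.mk ((x : PowerSeries ℂ) * f) := by
        show (Submodule.mapQ p p (LinearMap.mulLeft ℂ (x : PowerSeries ℂ)) (hle x))
            (Submodule.Quotient.mk f) = _
        rw [Submodule.mapQ_apply]
        rfl
      rw [h3, Submodule.Quotient.mk_eq_zero] at h2
      exact h2
    have hfdp : FiniteDimensional ℂ p := FiniteDimensional.of_injective Ψ hΨinj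
    -- then the whole power series ring is finite dimensional, contradiction
    obtain ⟨q, hq⟩ := p.exists_isCompl
    have hfdq : FiniteDimensional ℂ q :=
      LinearEquiv.finiteDimensional (Submodule.quotientEquivOfIsCompl p q hq)
    have : FiniteDimensional ℂ (⊤ : Submodule ℂ (PowerSeries ℂ)) := by
      rw [← hq.sup_eq_top]
      infer_instance
    exact not_fd (Submodule.topEquiv.finiteDimensional)
  -- Step 2: N = ord x works
  refine ⟨ord x, fun f hf => ?_⟩
  have hx := ord_spec hx0
  obtain ⟨v, hv⟩ : (PowerSeries.X : PowerSeries ℂ) ^ (ord x) ∣ x :=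
    PowerSeries.X_pow_dvd_iff.mpr (fun m hm => hx.2 m hm)
  have hcv : PowerSeries.coeff 0 v ≠ 0 := by
    intro hc
    apply hx.1
    have h4 := PowerSeries.coeff_X_pow_mul v (ord x) 0
    rw [zero_add] at h4
    nth_rewrite 2 [hv]
    rw [h4, hc]
  have hvunit : IsUnit v := by
    rw [PowerSeries.isUnit_iff_constantCoeff, ← PowerSeries.coeff_zero_eq_constantCoeff_apply]
    exact isUnit_iff_ne_zero.mpr hcv
  obtain ⟨w, hw⟩ : (PowerSeries.X : PowerSeries ℂ) ^ (ord x) ∣ f :=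
    PowerSeries.X_pow_dvd_iff.mpr hf
  obtain ⟨u, hu⟩ := hvunit
  have hfx : f = x * (↑u⁻¹ * w) := by
    rw [hv, ← hu, mul_assoc, Units.mul_inv_cancel_left, ← hw]
  rw [hfx]
  exact hxc _

lemma exists_norm (O : Subalgebra ℂ (PowerSeries ℂ)) {n : ℕ}
    (hn : n ∈ {m : ℕ | ∃ h ∈ O, h ≠ 0 ∧ m = ord h}) :
    ∃ h, h ∈ O ∧ PowerSeries.coeff n h = 1 ∧ ∀ i < n, PowerSeries.coeff i h = 0 := by
  obtain ⟨h0, h0O, h0ne, rfl⟩ := hn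
  obtain ⟨hc, hlt⟩ := ord_spec h0ne
  refine ⟨(PowerSeries.coeff (ord h0) h0)⁻¹ • h0, O.smul_mem h0O _, ?_, ?_⟩
  · rw [map_smul, smul_eq_mul, inv_mul_cancel₀ hc]
  · intro i hi
    rw [map_smul, smul_eq_mul, hlt i hi, mul_zero]

lemma sweep (O : Subalgebra ℂ (PowerSeries ℂ)) (g : ℕ)
    (hg : g ∈ {m : ℕ | ∃ h ∈ O, h ≠ 0 ∧ m = ord h}) (B : ℕ) :
    ∃ τ, τ ∈ O ∧ PowerSeries.coeff g τ = 1 ∧ (∀ i < g, PowerSeries.coeff i τ = 0) ∧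
      ∀ i, g < i → i < B → i ∈ {m : ℕ | ∃ h ∈ O, h ≠ 0 ∧ m = ord h} →
        PowerSeries.coeff i τ = 0 := by
  induction B with
  | zero =>
    obtain ⟨h, hO, h1, h2⟩ := exists_norm O hg
    exact ⟨h, hO, h1, h2, fun i _ hi0 _ => absurd hi0 (Nat.not_lt_zero i)⟩
  | succ B ih =>
    obtain ⟨τ, hτO, hτ1, hτ2, hτ3⟩ := ih
    by_cases hB : g < B ∧ B ∈ {m : ℕ | ∃ h ∈ O, h ≠ 0 ∧ m = ord h}
    · obtain ⟨h, hO, h1, h2⟩ := exists_norm O hB.2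
      refine ⟨τ - (PowerSeries.coeff B τ) • h, O.sub_mem hτO (O.smul_mem hO _), ?_, ?_, ?_⟩
      · rw [map_sub, map_smul, smul_eq_mul, h2 g hB.1, mul_zero, sub_zero, hτ1]
      · intro i hi
        rw [map_sub, map_smul, smul_eq_mul, h2 i (hi.trans hB.1), mul_zero, sub_zero, hτ2 i hi]
      · intro i hgi hiB hiΓ
        rcases Nat.lt_succ_iff_lt_or_eq.mp hiB with hiB' | rfl
        · rw [map_sub, map_smul, smul_eq_mul, h2 i (hiB'.trans_le (le_of_eq rfl)), mul_zero,
            sub_zero, hτ3 i hgi hiB' hiΓ]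
        · rw [map_sub, map_smul, smul_eq_mul, h1, mul_one, sub_self]
    · refine ⟨τ, hτO, hτ1, hτ2, fun i hgi hiB hiΓ => ?_⟩
      rcases Nat.lt_succ_iff_lt_or_eq.mp hiB with hiB' | rfl
      · exact hτ3 i hgi hiB' hiΓ
      · exact absurd ⟨hgi, hiΓ⟩ hB


/-- Let `O ⊆ ℂ[[t]]` be a `ℂ`-subalgebra with `dim_ℂ ℂ[[t]]/O < ∞` and put
`Γ = {ord h : h ∈ O, h ≠ 0}`.  For every `g ∈ Γ` there is a unique `τ_g ∈ O` with
coefficient of `t^g` equal to `1` and coefficient of `t^i` equal to `0` for all `i < g`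
and all `i > g` lying in `Γ`. -/
theorem existsUnique_tau
    (O : Subalgebra ℂ (PowerSeries ℂ))
    (hO : FiniteDimensional ℂ ((PowerSeries ℂ) ⧸ Subalgebra.toSubmodule O))
    (g : ℕ) (hg : g ∈ {n : ℕ | ∃ h ∈ O, h ≠ 0 ∧ n = ord h}) :
    ∃! τ : PowerSeries ℂ, τ ∈ O ∧
      PowerSeries.coeff g τ = 1 ∧
      (∀ i, i < g → PowerSeries.coeff i τ = 0) ∧
      (∀ i, i > g → i ∈ {n : ℕ | ∃ h ∈ O, h ≠ 0 ∧ n = ord h} →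
        PowerSeries.coeff i τ = 0) := by
  classical
  obtain ⟨N, hN⟩ := exists_conductor O hO
  set B := max N (g + 1) with hB
  obtain ⟨τ₀, hτO, hτ1, hτ2, hτ3⟩ := sweep O g hg B
  set r : PowerSeries ℂ :=
    PowerSeries.mk (fun i => if i < B then 0 else PowerSeries.coeff i τ₀) with hr
  have hrO : r ∈ O := by
    apply hN
    intro i hi
    rw [hr, PowerSeries.coeff_mk, if_pos (hi.trans_le (le_max_left _ _))]
  have hcoeff : ∀ i, PowerSeries.coeff i (τ₀ - r) =
      if i < B then PowerSeries.coeff i τ₀ else 0 := by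
    intro i
    rw [map_sub, hr, PowerSeries.coeff_mk]
    by_cases h : i < B <;> simp [h]
  have hgB : g < B := lt_of_lt_of_le (Nat.lt_succ_self g) (le_max_right _ _)
  refine ⟨τ₀ - r, ⟨O.sub_mem hτO hrO, ?_, ?_, ?_⟩, ?_⟩
  · rw [hcoeff, if_pos hgB, hτ1]
  · intro i hi
    rw [hcoeff, if_pos (hi.trans hgB), hτ2 i hi]
  · intro i hig hiΓ
    rw [hcoeff]
    by_cases h : i < B
    · rw [if_pos h, hτ3 i hig h hiΓ]
    · rw [if_neg h]
  · -- uniqueness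
    intro σ hσ
    obtain ⟨hσO, hσ1, hσ2, hσ3⟩ := hσ
    by_contra hne
    have hδne : σ - (τ₀ - r) ≠ 0 := sub_ne_zero.mpr hne
    have hδO : σ - (τ₀ - r) ∈ O := O.sub_mem hσO (O.sub_mem hτO hrO)
    obtain ⟨hc, hlt⟩ := ord_spec hδne
    have hΓ : ord (σ - (τ₀ - r)) ∈ {n : ℕ | ∃ h ∈ O, h ≠ 0 ∧ n = ord h} :=
      ⟨σ - (τ₀ - r), hδO, hδne, rfl⟩
    have hτP1 : PowerSeries.coeff g (τ₀ - r) = 1 := by rw [hcoeff, if_pos hgB, hτ1]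
    have hτP2 : ∀ i, i < g → PowerSeries.coeff i (τ₀ - r) = 0 := by
      intro i hi
      rw [hcoeff, if_pos (hi.trans hgB), hτ2 i hi]
    have hτP3 : ∀ i, g < i → i ∈ {n : ℕ | ∃ h ∈ O, h ≠ 0 ∧ n = ord h} →
        PowerSeries.coeff i (τ₀ - r) = 0 := by
      intro i hig hiΓ
      rw [hcoeff]
      by_cases h : i < B
      · rw [if_pos h, hτ3 i hig h hiΓ]
      · rw [if_neg h]
    apply hc
    rcases lt_trichotomy (ord (σ - (τ₀ - r))) g with hlt' | heq | hgt
    · rw [map_sub, hσ2 _ hlt', hτP2 _ hlt', sub_zero]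
    · rw [map_sub, heq, hσ1, hτP1, sub_self]
    · rw [map_sub, hσ3 _ hgt hΓ, hτP3 _ hgt hΓ, sub_zero]
end

section
/- Let Γ = ℕ ∖ {1,2,3,5,7,9,11,15} and let O be the ℂ-subalgebra of ℂ[[t]] that is the image of the substitution homomorphism ℂ[[x,y]] → ℂ[[t]], x ↦ t⁴, y ↦ t⁶ + t⁷. Let Δ ⊆ ℕ satisfy 0 ∈ Δ and Δ + Γ ⊆ Δ, let 0 = α₀ < α₁ < ⋯ < α_r be the minimal generators of Δ as a Γ-module, and choose f₀, …, f_r ∈ ℂ[[t]] with ord(f_j) = α_j for each j. Suppose φ₀, …, φ_r ∈ O are such that g = Σ_j f_j φ_j is nonzero and η = ord(g) ∉ Δ. Then: α₁ = 2; 1 ∉ Δ and 3 ∉ Δ; η ∈ {7, 9, 11, 15}; and ord(f₀ φ₀) = ord(f₁ φ₁) = min over j with f_j φ_j ≠ 0 of ord(f_j φ_j). -/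
set_option maxHeartbeats 1000000

/-- The substitution homomorphism `ℂ[[x,y]] → ℂ[[t]]`, `x ↦ t⁴`, `y ↦ t⁶ + t⁷`,
described coefficientwise. -/
noncomputable def subst47 (P : MvPowerSeries (Fin 2) ℂ) : PowerSeries ℂ :=
  PowerSeries.mk fun n => ∑ᶠ d : Fin 2 →₀ ℕ,
    MvPowerSeries.coeff d P *
      PowerSeries.coeff n
        (((PowerSeries.X : PowerSeries ℂ) ^ 4) ^ (d 0) *
          ((PowerSeries.X : PowerSeries ℂ) ^ 6 + (PowerSeries.X : PowerSeries ℂ) ^ 7) ^ (d 1))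

/-- `O = ℂ[[t⁴, t⁶+t⁷]]`, the image of the substitution homomorphism. -/
noncomputable def Oimage : Set (PowerSeries ℂ) := Set.range subst47


-- ord infrastructure
lemma ord_coeff {f : PowerSeries ℂ} (hf : f ≠ 0) : PowerSeries.coeff (ord f) f ≠ 0 := by
  have hne : {i : ℕ | PowerSeries.coeff i f ≠ 0}.Nonempty := by
    by_contra h
    rw [Set.not_nonempty_iff_eq_empty, Set.eq_empty_iff_forall_notMem] at h
    apply hf
    ext n
    have := h n
    simpa using this
  exact Nat.sInf_mem hne

lemma ord_le {f : PowerSeries ℂ} {m : ℕ} (h : PowerSeries.coeff m f ≠ 0) : ord f ≤ m :=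
  Nat.sInf_le h

lemma coeff_lt_ord {f : PowerSeries ℂ} {m : ℕ} (h : m < ord f) : PowerSeries.coeff m f = 0 := by
  by_contra h'
  exact absurd (ord_le h') (by omega)

lemma ord_mul {f g : PowerSeries ℂ} (hf : f ≠ 0) (hg : g ≠ 0) :
    ord (f * g) = ord f + ord g := by
  have hfg : f * g ≠ 0 := mul_ne_zero hf hg
  have o1 : f.order = (ord f : ℕ) := PowerSeries.order_eq_nat.2 ⟨ord_coeff hf, fun _ hi => coeff_lt_ord hi⟩
  have o2 : g.order = (ord g : ℕ) := PowerSeries.order_eq_nat.2 ⟨ord_coeff hg, fun _ hi => coeff_lt_ord hi⟩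
  have o3 : (f * g).order = ((ord f + ord g : ℕ) : ℕ∞) := by
    rw [PowerSeries.order_mul, o1, o2]
    push_cast
    rfl
  obtain ⟨h1, h2⟩ := PowerSeries.order_eq_nat.1 o3
  refine le_antisymm (ord_le h1) ?_
  by_contra hlt
  push_neg at hlt
  exact ord_coeff hfg (h2 _ hlt)

-- coefficient formula
noncomputable def Kc (n a b : ℕ) : ℂ :=
  if 4*a+6*b ≤ n then ((b.choose (n - (4*a+6*b))) : ℂ) else 0

lemma coeff_one_add_X_pow (b k : ℕ) :
    PowerSeries.coeff (R := ℂ) k ((1 + PowerSeries.X)^b) = b.choose k := by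
  have h2 : (((1 + Polynomial.X : Polynomial ℂ)^b : Polynomial ℂ) : PowerSeries ℂ)
      = (1 + PowerSeries.X)^b := by push_cast; ring
  rw [← h2, Polynomial.coeff_coe, add_comm, Polynomial.coeff_X_add_one_pow]

lemma Kformula (a b n : ℕ) :
    PowerSeries.coeff n (((PowerSeries.X : PowerSeries ℂ)^4)^a *
      ((PowerSeries.X : PowerSeries ℂ)^6 + (PowerSeries.X : PowerSeries ℂ)^7)^b)
    = Kc n a b := by
  have h : ((PowerSeries.X : PowerSeries ℂ)^4)^a *
      ((PowerSeries.X : PowerSeries ℂ)^6 + (PowerSeries.X : PowerSeries ℂ)^7)^b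
      = PowerSeries.X^(4*a+6*b) * (1 + PowerSeries.X)^b := by
    have hxy : ((PowerSeries.X : PowerSeries ℂ)^6 + (PowerSeries.X : PowerSeries ℂ)^7)
        = PowerSeries.X^6 * (1 + PowerSeries.X) := by ring
    rw [hxy, mul_pow, ← pow_mul, ← pow_mul, ← mul_assoc, ← pow_add]
  rw [h, mul_comm, PowerSeries.coeff_mul_X_pow', Kc]
  split <;> simp [coeff_one_add_X_pow]

lemma subst_coeff (P : MvPowerSeries (Fin 2) ℂ) (n : ℕ) :
    PowerSeries.coeff n (subst47 P)
      = ∑ᶠ d : Fin 2 →₀ ℕ, MvPowerSeries.coeff d P * Kc n (d 0) (d 1) := by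
  rw [subst47, PowerSeries.coeff_mk]
  exact finsum_congr fun d => by rw [Kformula]

lemma Kc_zero {n : ℕ} (hn : n = 1 ∨ n = 2 ∨ n = 3 ∨ n = 5 ∨ n = 9) (a b : ℕ) :
    Kc n a b = 0 := by
  rcases le_or_gt (4*a+6*b) n with h | h
  · have ha : a ≤ 2 := by omega
    have hb : b ≤ 1 := by omega
    rcases hn with rfl | rfl | rfl | rfl | rfl <;>
      interval_cases a <;> interval_cases b <;> norm_num [Kc, Nat.choose]
  · rw [Kc, if_neg (by omega)]

lemma Kc76 (a b : ℕ) : Kc 7 a b = Kc 6 a b := by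
  rcases le_or_gt (4*a+6*b) 7 with h | h
  · have ha : a ≤ 1 := by omega
    have hb : b ≤ 1 := by omega
    interval_cases a <;> interval_cases b <;> norm_num [Kc, Nat.choose]
  · rw [Kc, Kc, if_neg (by omega), if_neg (by omega)]

lemma Kc1110 (a b : ℕ) : Kc 11 a b = Kc 10 a b := by
  rcases le_or_gt (4*a+6*b) 11 with h | h
  · have ha : a ≤ 2 := by omega
    have hb : b ≤ 1 := by omega
    interval_cases a <;> interval_cases b <;> norm_num [Kc, Nat.choose]
  · rw [Kc, Kc, if_neg (by omega), if_neg (by omega)]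

lemma Kc151413 (a b : ℕ) : Kc 13 a b + 2 * Kc 15 a b = 2 * Kc 14 a b := by
  rcases le_or_gt (4*a+6*b) 15 with h | h
  · have ha : a ≤ 3 := by omega
    have hb : b ≤ 2 := by omega
    interval_cases a <;> interval_cases b <;> norm_num [Kc, Nat.choose]
  · rw [Kc, Kc, Kc, if_neg (by omega), if_neg (by omega), if_neg (by omega)]
    ring

lemma finite_supp (c : (Fin 2 →₀ ℕ) → ℂ) (n : ℕ) :
    (Function.support fun d : Fin 2 →₀ ℕ => c d * Kc n (d 0) (d 1)).Finite := by
  apply Set.Finite.subset (Set.finite_Iic (Finsupp.equivFunOnFinite.symm ![n, n]))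
  intro d hd
  have hK : Kc n (d 0) (d 1) ≠ 0 := by
    intro h0
    apply hd
    simp [h0]
  have hle : 4*(d 0)+6*(d 1) ≤ n := by
    by_contra hc
    exact hK (by rw [Kc, if_neg hc])
  rw [Set.mem_Iic, Finsupp.le_def]
  intro i
  fin_cases i <;> simp <;> omega

lemma coeff_subst_zero (P : MvPowerSeries (Fin 2) ℂ) {n : ℕ}
    (hn : n = 1 ∨ n = 2 ∨ n = 3 ∨ n = 5 ∨ n = 9) :
    PowerSeries.coeff n (subst47 P) = 0 := by
  rw [subst_coeff, finsum_congr (fun d => by rw [Kc_zero hn, mul_zero])]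
  exact finsum_zero

lemma coeff_subst_76 (P : MvPowerSeries (Fin 2) ℂ) :
    PowerSeries.coeff 7 (subst47 P) = PowerSeries.coeff 6 (subst47 P) := by
  rw [subst_coeff, subst_coeff]
  exact finsum_congr (fun d => by rw [Kc76])

lemma coeff_subst_1110 (P : MvPowerSeries (Fin 2) ℂ) :
    PowerSeries.coeff 11 (subst47 P) = PowerSeries.coeff 10 (subst47 P) := by
  rw [subst_coeff, subst_coeff]
  exact finsum_congr (fun d => by rw [Kc1110])

lemma coeff_subst_15 (P : MvPowerSeries (Fin 2) ℂ) :
    PowerSeries.coeff 13 (subst47 P) + 2 * PowerSeries.coeff 15 (subst47 P)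
      = 2 * PowerSeries.coeff 14 (subst47 P) := by
  rw [subst_coeff, subst_coeff, subst_coeff]
  set c : (Fin 2 →₀ ℕ) → ℂ := fun d => MvPowerSeries.coeff d P with hc
  have h13 := finite_supp c 13
  have h15 := finite_supp c 15
  have h14 := finite_supp c 14
  have h15' : (Function.support fun d : Fin 2 →₀ ℕ => 2 * (c d * Kc 15 (d 0) (d 1))).Finite := by
    apply h15.subset
    intro d hd
    simp only [Function.mem_support] at hd ⊢
    intro h0
    exact hd (by rw [h0, mul_zero])
  rw [mul_finsum _ 2, ← finsum_add_distrib h13 h15',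
      mul_finsum _ 2]
  exact finsum_congr fun d => by
    linear_combination (c d) * Kc151413 (d 0) (d 1)

lemma ord_Oimage_not_gap {φ : PowerSeries ℂ} (hφ : φ ∈ Oimage) (h0 : φ ≠ 0) :
    ¬(ord φ = 1 ∨ ord φ = 2 ∨ ord φ = 3 ∨ ord φ = 5 ∨ ord φ = 7 ∨ ord φ = 9 ∨
      ord φ = 11 ∨ ord φ = 15) := by
  obtain ⟨P, rfl⟩ := hφ
  have hc := ord_coeff h0
  intro hor
  rcases hor with h | h | h | h | h | h | h | h
  · exact hc (by rw [h]; exact coeff_subst_zero P (by tauto))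
  · exact hc (by rw [h]; exact coeff_subst_zero P (by tauto))
  · exact hc (by rw [h]; exact coeff_subst_zero P (by tauto))
  · exact hc (by rw [h]; exact coeff_subst_zero P (by tauto))
  · refine hc ?_
    rw [h, coeff_subst_76 P]
    exact coeff_lt_ord (by omega)
  · exact hc (by rw [h]; exact coeff_subst_zero P (by tauto))
  · refine hc ?_
    rw [h, coeff_subst_1110 P]
    exact coeff_lt_ord (by omega)
  · refine hc ?_
    rw [h]
    have h15 := coeff_subst_15 P
    have e13 : PowerSeries.coeff 13 (subst47 P) = 0 := coeff_lt_ord (by omega)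
    have e14 : PowerSeries.coeff 14 (subst47 P) = 0 := coeff_lt_ord (by omega)
    rw [e13, e14] at h15
    have h2 : (2:ℂ) ≠ 0 := by norm_num
    field_simp at h15
    exact (mul_eq_zero.1 (by linear_combination h15 : 2 * PowerSeries.coeff 15 (subst47 P) = (0:ℂ))).resolve_left h2


section ArithHelpers

private lemma arith_eta (ai aj oi oj μ η : ℕ)
    (ei : ai + oi = μ) (ej : aj + oj = μ)
    (hni : ¬(oi = 1 ∨ oi = 2 ∨ oi = 3 ∨ oi = 5 ∨ oi = 7 ∨ oi = 9 ∨ oi = 11 ∨ oi = 15))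
    (hnj : ¬(oj = 1 ∨ oj = 2 ∨ oj = 3 ∨ oj = 5 ∨ oj = 7 ∨ oj = 9 ∨ oj = 11 ∨ oj = 15))
    (hd : aj - ai = 1 ∨ aj - ai = 2 ∨ aj - ai = 3 ∨ aj - ai = 5 ∨ aj - ai = 7 ∨
      aj - ai = 9 ∨ aj - ai = 11 ∨ aj - ai = 15)
    (haij : ai < aj)
    (hηg : η = 1 ∨ η = 2 ∨ η = 3 ∨ η = 5 ∨ η = 7 ∨ η = 9 ∨ η = 11 ∨ η = 15)
    (hμη : μ < η) :
    η = 7 ∨ η = 9 ∨ η = 11 ∨ η = 15 := by omega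

private lemma arith_eta_facts (η : ℕ) (hη4 : η = 7 ∨ η = 9 ∨ η = 11 ∨ η = 15) :
    (¬(η - 1 = 1 ∨ η - 1 = 2 ∨ η - 1 = 3 ∨ η - 1 = 5 ∨ η - 1 = 7 ∨ η - 1 = 9 ∨
      η - 1 = 11 ∨ η - 1 = 15)) ∧ 1 + (η - 1) = η ∧
    (¬(η - 3 = 1 ∨ η - 3 = 2 ∨ η - 3 = 3 ∨ η - 3 = 5 ∨ η - 3 = 7 ∨ η - 3 = 9 ∨
      η - 3 = 11 ∨ η - 3 = 15)) ∧ 3 + (η - 3) = η := by omega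

private lemma arith_key (ai aj oi oj μ η : ℕ)
    (ei : ai + oi = μ) (ej : aj + oj = μ)
    (hni : ¬(oi = 1 ∨ oi = 2 ∨ oi = 3 ∨ oi = 5 ∨ oi = 7 ∨ oi = 9 ∨ oi = 11 ∨ oi = 15))
    (hnj : ¬(oj = 1 ∨ oj = 2 ∨ oj = 3 ∨ oj = 5 ∨ oj = 7 ∨ oj = 9 ∨ oj = 11 ∨ oj = 15))
    (hd : aj - ai = 1 ∨ aj - ai = 2 ∨ aj - ai = 3 ∨ aj - ai = 5 ∨ aj - ai = 7 ∨
      aj - ai = 9 ∨ aj - ai = 11 ∨ aj - ai = 15)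
    (haij : ai < aj)
    (hη4 : η = 7 ∨ η = 9 ∨ η = 11 ∨ η = 15)
    (hη15 : η ≠ 15)
    (hμη : μ < η)
    (hjgap : aj = 1 ∨ aj = 2 ∨ aj = 3 ∨ aj = 5 ∨ aj = 7 ∨ aj = 9 ∨ aj = 11 ∨ aj = 15)
    (hj1 : aj ≠ 1) (hj3 : aj ≠ 3)
    (hai : ai = 0 ∨ (ai = 1 ∨ ai = 2 ∨ ai = 3 ∨ ai = 5 ∨ ai = 7 ∨ ai = 9 ∨ ai = 11 ∨
      ai = 15))
    (hi1 : ai ≠ 1) (hi3 : ai ≠ 3) :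
    ai = 0 ∧ aj = 2 := by omega

private lemma arith_pos_r (jv r : ℕ) (h1 : 1 ≤ jv) (h2 : jv < r + 1) : 0 < r := by omega

private lemma arith_eq_two (x : ℕ) (h2 : x ≤ 2) (h0 : 0 < x) (h1 : x ≠ 1) : x = 2 := by
  omega

end ArithHelpers

/-- Lemma 6.1 of the paper, for `Γ = ⟨4,6,13⟩ = ℕ ∖ {1,2,3,5,7,9,11,15}` and
`O = ℂ[[t⁴, t⁶+t⁷]]`: if `Δ` is a `Γ`-module with minimal generators
`0 = α₀ < α₁ < ⋯ < α_r`, `f_j ∈ ℂ[[t]]` have orders `α_j`, `φ_j ∈ O`, and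
`g = Σ f_j φ_j` is nonzero with `η = ord g ∉ Δ`, then `α₁ = 2`, `1, 3 ∉ Δ`,
`η ∈ {7,9,11,15}`, and `ord (f₀φ₀) = ord (f₁φ₁) = min_j ord (f_j φ_j)`. -/
theorem order_jump_lemma
    (Γ : Set ℕ) (hΓ : Γ = ({1, 2, 3, 5, 7, 9, 11, 15} : Set ℕ)ᶜ)
    (Δ : Set ℕ) (h0Δ : 0 ∈ Δ) (hΔΓ : ∀ δ ∈ Δ, ∀ γ ∈ Γ, δ + γ ∈ Δ)
    (r : ℕ) (α : Fin (r + 1) → ℕ) (hmono : StrictMono α) (hα0 : α 0 = 0)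
    (hαΔ : ∀ j, α j ∈ Δ)
    (hgen : Δ = ⋃ j, ((α j + ·) '' Γ))
    (hmin : ∀ s : Set ℕ, s ⊆ Set.range α →
      Δ = ⋃ a ∈ s, ((a + ·) '' Γ) → s = Set.range α)
    (f : Fin (r + 1) → PowerSeries ℂ)
    (hf0 : ∀ j, f j ≠ 0) (hford : ∀ j, ord (f j) = α j)
    (phi : Fin (r + 1) → PowerSeries ℂ) (hphi : ∀ j, phi j ∈ Oimage)
    (hg : (∑ j, f j * phi j) ≠ 0)
    (η : ℕ) (hη : η = ord (∑ j, f j * phi j)) (hηΔ : η ∉ Δ) :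
    ∃ hr : 0 < r,
      α ⟨1, Nat.succ_lt_succ hr⟩ = 2 ∧
      1 ∉ Δ ∧ 3 ∉ Δ ∧
      η ∈ ({7, 9, 11, 15} : Set ℕ) ∧
      f 0 * phi 0 ≠ 0 ∧
      f ⟨1, Nat.succ_lt_succ hr⟩ * phi ⟨1, Nat.succ_lt_succ hr⟩ ≠ 0 ∧
      ord (f 0 * phi 0) =
        ord (f ⟨1, Nat.succ_lt_succ hr⟩ * phi ⟨1, Nat.succ_lt_succ hr⟩) ∧
      ord (f 0 * phi 0) =
        sInf {m : ℕ | ∃ j, f j * phi j ≠ 0 ∧ m = ord (f j * phi j)} := by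
  have hΓmem : ∀ n : ℕ, n ∈ Γ ↔
      ¬(n = 1 ∨ n = 2 ∨ n = 3 ∨ n = 5 ∨ n = 7 ∨ n = 9 ∨ n = 11 ∨ n = 15) := by
    intro n
    rw [hΓ]
    simp only [Set.mem_compl_iff, Set.mem_insert_iff, Set.mem_singleton_iff]
  have hΓΔ : ∀ γ ∈ Γ, γ ∈ Δ := fun γ hγ => by simpa using hΔΓ 0 h0Δ γ hγ
  have hclosed : ∀ a b : ℕ, a ∈ Γ → b ∈ Γ → a + b ∈ Γ := by
    intro a b ha hb
    rw [hΓmem] at ha hb ⊢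
    omega
  have hdiff : ∀ i j : Fin (r+1), i < j → (α j - α i) ∉ Γ := by
    intro i j hij hin
    have hle : α i ≤ α j := le_of_lt (hmono hij)
    have hsub : (α '' {k | k ≠ j}) ⊆ Set.range α := by
      rintro x ⟨k, _, rfl⟩; exact ⟨k, rfl⟩
    have hcov : Δ = ⋃ a ∈ (α '' {k | k ≠ j}), ((a + ·) '' Γ) := by
      apply Set.Subset.antisymm
      · intro x hx
        rw [hgen] at hx
        simp only [Set.mem_iUnion, Set.mem_image] at hx
        obtain ⟨k, γ, hγ, hkx⟩ := hx
        simp only [Set.mem_iUnion, Set.mem_image, Set.mem_setOf_eq, exists_prop]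
        by_cases hkj : k = j
        · subst hkj
          refine ⟨α i, ⟨i, hij.ne, rfl⟩, (α k - α i) + γ, hclosed _ _ hin hγ, ?_⟩
          omega
        · exact ⟨α k, ⟨k, hkj, rfl⟩, γ, hγ, hkx⟩
      · intro x hx
        simp only [Set.mem_iUnion, Set.mem_image, Set.mem_setOf_eq, exists_prop] at hx
        obtain ⟨a, ⟨k, hkj, rfl⟩, γ, hγ, hkx⟩ := hx
        rw [hgen]
        exact Set.mem_iUnion.2 ⟨k, ⟨γ, hγ, hkx⟩⟩
    have heq := hmin _ hsub hcov
    have hjmem : α j ∈ (α '' {k | k ≠ j}) := by rw [heq]; exact ⟨j, rfl⟩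
    obtain ⟨k, hkj, hk⟩ := hjmem
    exact hkj (hmono.injective hk)
  classical
  have hps : ∀ j : Fin (r+1), f j * phi j ≠ 0 ↔ phi j ≠ 0 := by
    intro j
    constructor
    · intro h hc; exact h (by rw [hc, mul_zero])
    · intro h; exact mul_ne_zero (hf0 j) h
  have hordm : ∀ j : Fin (r+1), phi j ≠ 0 → ord (f j * phi j) = α j + ord (phi j) := by
    intro j hj; rw [ord_mul (hf0 j) hj, hford j]
  have hordΔ : ∀ j : Fin (r+1), phi j ≠ 0 → ord (f j * phi j) ∈ Δ := by
    intro j hj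
    rw [hordm j hj]
    refine hΔΓ _ (hαΔ j) _ ?_
    rw [hΓmem]
    exact ord_Oimage_not_gap (hphi j) hj
  have hex : ∃ j, f j * phi j ≠ 0 := by
    by_contra h
    push_neg at h
    exact hg (Finset.sum_eq_zero fun j _ => h j)
  obtain ⟨j₁, hj₁⟩ := hex
  have hTne : {m : ℕ | ∃ j, f j * phi j ≠ 0 ∧ m = ord (f j * phi j)}.Nonempty :=
    ⟨ord (f j₁ * phi j₁), j₁, hj₁, rfl⟩
  obtain ⟨μ, hμdef⟩ : ∃ μ : ℕ,
      μ = sInf {m : ℕ | ∃ j, f j * phi j ≠ 0 ∧ m = ord (f j * phi j)} := ⟨_, rfl⟩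
  obtain ⟨j₀, hj₀ne, hj₀ord⟩ : ∃ j, f j * phi j ≠ 0 ∧ μ = ord (f j * phi j) := by
    rw [hμdef]; exact Nat.sInf_mem hTne
  have hμle : ∀ j : Fin (r+1), f j * phi j ≠ 0 → μ ≤ ord (f j * phi j) := by
    intro j hj
    rw [hμdef]
    exact Nat.sInf_le ⟨j, hj, rfl⟩
  have hμΔ : μ ∈ Δ := by rw [hj₀ord]; exact hordΔ j₀ ((hps j₀).1 hj₀ne)
  have hgcoeff : ∀ m, PowerSeries.coeff m (∑ j, f j * phi j)
      = ∑ j, PowerSeries.coeff m (f j * phi j) := fun m => map_sum _ _ _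
  have hηcoeff : PowerSeries.coeff η (∑ j, f j * phi j) ≠ 0 := by
    rw [hη]; exact ord_coeff hg
  have hμη : μ < η := by
    have h1 : μ ≤ η := by
      obtain ⟨j, _, hjne⟩ := Finset.exists_ne_zero_of_sum_ne_zero
        (by rw [← hgcoeff]; exact hηcoeff)
      have hne : f j * phi j ≠ 0 := fun h => hjne (by rw [h, map_zero])
      exact le_trans (hμle j hne) (ord_le hjne)
    rcases lt_or_eq_of_le h1 with h | h
    · exact h
    · exact absurd (h ▸ hμΔ) hηΔ
  have hμcoeff : PowerSeries.coeff μ (∑ j, f j * phi j) = 0 := by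
    have h' := hμη
    rw [hη] at h'
    exact coeff_lt_ord h'
  have hj₀c : PowerSeries.coeff μ (f j₀ * phi j₀) ≠ 0 := by
    rw [hj₀ord]; exact ord_coeff hj₀ne
  have hsecond : ∃ k, k ≠ j₀ ∧ PowerSeries.coeff μ (f k * phi k) ≠ 0 := by
    by_contra h
    push_neg at h
    have hs := hgcoeff μ
    rw [hμcoeff, Finset.sum_eq_single j₀ (fun k _ hk => h k hk)
      (fun h' => absurd (Finset.mem_univ j₀) h')] at hs
    exact hj₀c hs.symm
  obtain ⟨k₀, hk₀j₀, hk₀c⟩ := hsecond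
  have hk₀ne : f k₀ * phi k₀ ≠ 0 := fun h => hk₀c (by rw [h, map_zero])
  have hk₀ord : ord (f k₀ * phi k₀) = μ := le_antisymm (ord_le hk₀c) (hμle k₀ hk₀ne)
  obtain ⟨i, j, hij, hine, hjne, hiord, hjord⟩ :
      ∃ i j : Fin (r+1), i < j ∧ f i * phi i ≠ 0 ∧ f j * phi j ≠ 0 ∧
        ord (f i * phi i) = μ ∧ ord (f j * phi j) = μ := by
    rcases lt_or_gt_of_ne hk₀j₀ with h | h
    · exact ⟨k₀, j₀, h, hk₀ne, hj₀ne, hk₀ord, hj₀ord.symm⟩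
    · exact ⟨j₀, k₀, h, hj₀ne, hk₀ne, hj₀ord.symm, hk₀ord⟩
  have hφi : phi i ≠ 0 := (hps i).1 hine
  have hφj : phi j ≠ 0 := (hps j).1 hjne
  obtain ⟨oi, hoi⟩ : ∃ v : ℕ, ord (phi i) = v := ⟨_, rfl⟩
  obtain ⟨oj, hoj⟩ : ∃ v : ℕ, ord (phi j) = v := ⟨_, rfl⟩
  have ei : α i + oi = μ := by rw [← hoi, ← hiord, hordm i hφi]
  have ej : α j + oj = μ := by rw [← hoj, ← hjord, hordm j hφj]
  have hnig : ¬(oi = 1 ∨ oi = 2 ∨ oi = 3 ∨ oi = 5 ∨ oi = 7 ∨ oi = 9 ∨ oi = 11 ∨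
      oi = 15) := hoi ▸ ord_Oimage_not_gap (hphi i) hφi
  have hnjg : ¬(oj = 1 ∨ oj = 2 ∨ oj = 3 ∨ oj = 5 ∨ oj = 7 ∨ oj = 9 ∨ oj = 11 ∨
      oj = 15) := hoj ▸ ord_Oimage_not_gap (hphi j) hφj
  have hαij : α i < α j := hmono hij
  have hdg' : (α j - α i = 1 ∨ α j - α i = 2 ∨ α j - α i = 3 ∨ α j - α i = 5 ∨
      α j - α i = 7 ∨ α j - α i = 9 ∨ α j - α i = 11 ∨ α j - α i = 15) := by
    have h := hdiff i j hij
    rw [hΓmem] at h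
    exact not_not.mp h
  have hηg : (η = 1 ∨ η = 2 ∨ η = 3 ∨ η = 5 ∨ η = 7 ∨ η = 9 ∨ η = 11 ∨ η = 15) := by
    have hn : η ∉ Γ := fun h => hηΔ (hΓΔ _ h)
    rw [hΓmem] at hn
    exact not_not.mp hn
  have hη4 : η = 7 ∨ η = 9 ∨ η = 11 ∨ η = 15 :=
    arith_eta (α i) (α j) oi oj μ η ei ej hnig hnjg hdg' hαij hηg hμη
  obtain ⟨hγ1, he1, hγ3, he3⟩ := arith_eta_facts η hη4
  have h1Δ : 1 ∉ Δ := by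
    intro h1
    have hγ : (η - 1) ∈ Γ := by rw [hΓmem]; exact hγ1
    have hin := hΔΓ 1 h1 (η-1) hγ
    rw [he1] at hin
    exact hηΔ hin
  have h3Δ : 3 ∉ Δ := by
    intro h3
    have hγ : (η - 3) ∈ Γ := by rw [hΓmem]; exact hγ3
    have hin := hΔΓ 3 h3 (η-3) hγ
    rw [he3] at hin
    exact hηΔ hin
  have h0j : (0 : Fin (r+1)) < j := lt_of_le_of_lt (Fin.zero_le i) hij
  have hjgapΓ : α j ∉ Γ := by
    have h := hdiff 0 j h0j
    rwa [hα0, Nat.sub_zero] at h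
  have hjgap : α j = 1 ∨ α j = 2 ∨ α j = 3 ∨ α j = 5 ∨ α j = 7 ∨ α j = 9 ∨
      α j = 11 ∨ α j = 15 := by
    rw [hΓmem] at hjgapΓ
    exact not_not.mp hjgapΓ
  have hj1 : α j ≠ 1 := fun h => h1Δ (h ▸ hαΔ j)
  have hj3 : α j ≠ 3 := fun h => h3Δ (h ▸ hαΔ j)
  have h15Δ : 15 ∈ Δ := by
    have hmk : ∀ γ : ℕ, γ ∈ Γ → α j + γ = 15 → 15 ∈ Δ :=
      fun γ hγ he => he ▸ hΔΓ _ (hαΔ j) _ hγ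
    rcases hjgap with h|h|h|h|h|h|h|h
    · exact absurd h hj1
    · exact hmk 13 (by rw [hΓmem]; decide) (by rw [h])
    · exact absurd h hj3
    · exact hmk 10 (by rw [hΓmem]; decide) (by rw [h])
    · exact hmk 8 (by rw [hΓmem]; decide) (by rw [h])
    · exact hmk 6 (by rw [hΓmem]; decide) (by rw [h])
    · exact hmk 4 (by rw [hΓmem]; decide) (by rw [h])
    · exact hmk 0 (by rw [hΓmem]; decide) (by rw [h])
  have hη15 : η ≠ 15 := fun h => hηΔ (h ▸ h15Δ)
  have hi1 : α i ≠ 1 := fun h => h1Δ (h ▸ hαΔ i)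
  have hi3 : α i ≠ 3 := fun h => h3Δ (h ▸ hαΔ i)
  have hαi0 : α i = 0 ∨ (α i = 1 ∨ α i = 2 ∨ α i = 3 ∨ α i = 5 ∨ α i = 7 ∨ α i = 9 ∨
      α i = 11 ∨ α i = 15) := by
    by_cases hi0 : i = 0
    · left; rw [hi0, hα0]
    · right
      have h0i : (0 : Fin (r+1)) < i := Fin.pos_of_ne_zero hi0
      have h := hdiff 0 i h0i
      rw [hα0, Nat.sub_zero, hΓmem] at h
      exact not_not.mp h
  obtain ⟨hi0', hj2⟩ : α i = 0 ∧ α j = 2 :=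
    arith_key (α i) (α j) oi oj μ η ei ej hnig hnjg hdg' hαij hη4 hη15 hμη hjgap
      hj1 hj3 hαi0 hi1 hi3
  have hieq0 : i = 0 := hmono.injective (by rw [hi0', hα0])
  have hijval : (i : ℕ) < (j : ℕ) := hij
  have hival : (i : ℕ) = 0 := by rw [hieq0]; rfl
  have h1j : 1 ≤ (j : ℕ) := by rw [hival] at hijval; exact hijval
  have hr : 0 < r := arith_pos_r (j : ℕ) r h1j j.isLt
  have hone : α ⟨1, Nat.succ_lt_succ hr⟩ = 2 := by
    have hle : (⟨1, Nat.succ_lt_succ hr⟩ : Fin (r+1)) ≤ j := by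
      rw [Fin.le_def]
      exact h1j
    have h2 : α ⟨1, Nat.succ_lt_succ hr⟩ ≤ 2 := hj2 ▸ hmono.monotone hle
    have h0lt : 0 < α ⟨1, Nat.succ_lt_succ hr⟩ := by
      have := hmono (show (0 : Fin (r+1)) < ⟨1, Nat.succ_lt_succ hr⟩ by
        rw [Fin.lt_def]; exact Nat.zero_lt_one)
      rw [hα0] at this
      exact this
    have hne1 : α ⟨1, Nat.succ_lt_succ hr⟩ ≠ 1 :=
      fun h => h1Δ (h ▸ hαΔ ⟨1, Nat.succ_lt_succ hr⟩)
    exact arith_eq_two _ h2 h0lt hne1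
  have hjeq1 : j = ⟨1, Nat.succ_lt_succ hr⟩ := hmono.injective (by rw [hj2, hone])
  refine ⟨hr, hone, h1Δ, h3Δ, ?_, ?_, ?_, ?_, ?_⟩
  · simp only [Set.mem_insert_iff, Set.mem_singleton_iff]
    exact hη4
  · rw [← hieq0]; exact hine
  · rw [← hjeq1]; exact hjne
  · rw [← hieq0, ← hjeq1, hiord, hjord]
  · rw [← hμdef, ← hieq0]
    exact hiord
end
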